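/- For any positive semi-definite matrix M in R^{d×d}, any α > 0, and any vector x in R^d such that xᵀ(M + αI)⁻¹x ≤ 1, we have ‖(M(M + αI)⁻¹ − I)x‖₂² ≤ α. -/

import Mathlib

open Matrix

theorem stmt_0 {d : ℕ} (M : Matrix (Fin d) (Fin d) ℝ) (hM : M.PosSemidef)
    (α : ℝ) (hα : 0 < α) (x : Fin d → ℝ)
    (hx : x ⬝ᵥ (M + α • (1 : Matrix (Fin d) (Fin d) ℝ))⁻¹.mulVec x ≤ 1) :
    ∑ i, ((M * (M + α • (1 : Matrix (Fin d) (Fin d) ℝ))⁻¹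
        - 1).mulVec x i) ^ 2 ≤ α := by
  set A : Matrix (Fin d) (Fin d) ℝ := M + α • (1 : Matrix (Fin d) (Fin d) ℝ) with hA
  have hαI : (α • (1 : Matrix (Fin d) (Fin d) ℝ)).PosDef := by
    have h1 : (α • (1 : Matrix (Fin d) (Fin d) ℝ)) = Matrix.diagonal (fun _ => α) := by
      simp [Matrix.smul_one_eq_diagonal]
    rw [h1, Matrix.posDef_diagonal_iff]
    exact fun _ => hα
  have hApd : A.PosDef := Matrix.PosDef.posSemidef_add hM hαI
  have hdet : IsUnit A.det := hApd.isUnit.map Matrix.detMonoidHom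
  have hinv : A * A⁻¹ = 1 := Matrix.mul_nonsing_inv A hdet
  set y : Fin d → ℝ := A⁻¹.mulVec x with hy
  -- key algebra: M * A⁻¹ - 1 = (-α) • A⁻¹
  have key : M * A⁻¹ - 1 = (-α) • A⁻¹ := by
    have hMA : M = A - α • (1 : Matrix (Fin d) (Fin d) ℝ) := by rw [hA]; abel
    rw [hMA, Matrix.sub_mul, hinv, Matrix.smul_mul, Matrix.one_mul]
    module
  have hvec : (M * A⁻¹ - 1).mulVec x = fun i => -α * y i := by
    rw [key]
    funext i
    simp [Matrix.neg_mulVec, Matrix.smul_mulVec, hy]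
  have hAy : A.mulVec y = x := by
    rw [hy, Matrix.mulVec_mulVec, hinv, Matrix.one_mulVec]
  have hxy : x ⬝ᵥ y = y ⬝ᵥ M.mulVec y + α * (y ⬝ᵥ y) := by
    calc x ⬝ᵥ y = y ⬝ᵥ A.mulVec y := by rw [hAy, dotProduct_comm]
    _ = y ⬝ᵥ M.mulVec y + α * (y ⬝ᵥ y) := by
        rw [hA, Matrix.add_mulVec, dotProduct_add, Matrix.smul_mulVec,
          Matrix.one_mulVec, dotProduct_smul, smul_eq_mul]
  have hMy : 0 ≤ y ⬝ᵥ M.mulVec y := by simpa using hM.dotProduct_mulVec_nonneg y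
  have hyy : α * (y ⬝ᵥ y) ≤ 1 := by
    have : x ⬝ᵥ y ≤ 1 := hx
    linarith [hxy ▸ this]
  have hsum : ∑ i, ((M * A⁻¹ - 1).mulVec x i) ^ 2 = α ^ 2 * (y ⬝ᵥ y) := by
    rw [hvec, dotProduct, Finset.mul_sum]
    congr 1; funext i; ring
  rw [hsum]
  calc α ^ 2 * (y ⬝ᵥ y) = α * (α * (y ⬝ᵥ y)) := by ring
  _ ≤ α * 1 := by
      apply mul_le_mul_of_nonneg_left hyy (le_of_lt hα)
  _ = α := mul_one α
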